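/- Let α > 0 and Φ ∈ ℝ. Set A = 2(α+2)Φ/((α+4)π) and B = α/(α+2), and define the velocity field u : ℝ³ → ℝ³ by u(x₁,x₂,x₃) = (0, 0, A·(1 − B·(x₁²+x₂²))) and the pressure p : ℝ³ → ℝ by p(x₁,x₂,x₃) = −(8αΦ/((α+4)π))·x₃. Then: (i) div u = 0 everywhere on ℝ³; (ii) (u·∇)u + ∇p − Δu = 0 everywhere on ℝ³; (iii) at every point x with x₁² + x₂² = 1, writing n = (x₁, x₂, 0) for the unit outer normal of the cylinder, one has u(x)·n = 0 and 2(𝕊u(x)·n)_tan + α·u(x)_tan = 0; (iv) the flux through the cross section equals Φ, i.e. ∫_{{(x₁,x₂) : x₁²+x₂² < 1}} u₃(x₁,x₂,0) d(x₁,x₂) = Φ. Thus u is the Hagen–Poiseuille-type flow with flux Φ for the stationary Navier–Stokes equations with the Navier-slip boundary condition in the infinite pipe with unit-disk cross section. -/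

import Mathlib

open MeasureTheory

/-- Partial derivative `∂_i f` of a scalar function on `ℝ³ = (Fin 3 → ℝ)`. -/
noncomputable def pd3 (i : Fin 3) (f : (Fin 3 → ℝ) → ℝ) (x : Fin 3 → ℝ) : ℝ :=
  fderiv ℝ f x (Pi.single i 1)

/-- `k`-th component of `𝕊u · n`, where `𝕊u = (∇u + (∇u)ᵀ)/2` is the strain tensor. -/
noncomputable def strainDotN3 (u : (Fin 3 → ℝ) → Fin 3 → ℝ) (x n : Fin 3 → ℝ)
    (k : Fin 3) : ℝ :=
  ∑ j, ((pd3 k (fun y => u y j) x + pd3 j (fun y => u y k) x) / 2) * n j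

section Aux

open Set Real

lemma pd3_of {f : (Fin 3 → ℝ) → ℝ} {L : (Fin 3 → ℝ) →L[ℝ] ℝ} {x : Fin 3 → ℝ}
    (h : HasFDerivAt f L x) (i : Fin 3) : pd3 i f x = L (Pi.single i 1) := by
  rw [pd3, h.fderiv]

lemma pd3_constf (i : Fin 3) (c : ℝ) : pd3 i (fun _ : Fin 3 → ℝ => c) = fun _ => (0:ℝ) :=
  funext fun x => by simp [pd3, fderiv_const]

lemma hasFDerivAt_proj (j : Fin 3) (x : Fin 3 → ℝ) :
    HasFDerivAt (fun y : Fin 3 → ℝ => y j)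
      (ContinuousLinearMap.proj (R := ℝ) (φ := fun _ : Fin 3 => ℝ) j) x :=
  (ContinuousLinearMap.proj (R := ℝ) (φ := fun _ : Fin 3 => ℝ) j).hasFDerivAt

lemma hasFDerivAt_u2 (A B : ℝ) (x : Fin 3 → ℝ) :
    HasFDerivAt (fun y : Fin 3 → ℝ => A * (1 - B * ((y 0) ^ 2 + (y 1) ^ 2)))
      ((-(2 * A * B * x 0)) • (ContinuousLinearMap.proj (R := ℝ) (φ := fun _ : Fin 3 => ℝ) 0)
        + (-(2 * A * B * x 1)) • (ContinuousLinearMap.proj (R := ℝ) (φ := fun _ : Fin 3 => ℝ) 1)) x := by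
  have h0 := hasFDerivAt_proj 0 x
  have h1 := hasFDerivAt_proj 1 x
  have h := ((((h0.mul h0).add (h1.mul h1)).const_mul B).const_sub 1).const_mul A
  simp only [pow_two]
  refine h.congr_fderiv ?_
  ext y
  simp [Pi.single_apply]
  ring

lemma pd3_u2' (A B : ℝ) (i : Fin 3) (x : Fin 3 → ℝ) :
    pd3 i (fun y : Fin 3 → ℝ => A * (1 - B * ((y 0) ^ 2 + (y 1) ^ 2))) x
      = -(2 * A * B * x 0) * (Pi.single i 1 : Fin 3 → ℝ) 0
        + -(2 * A * B * x 1) * (Pi.single i 1 : Fin 3 → ℝ) 1 := by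
  rw [pd3_of (hasFDerivAt_u2 A B x) i]
  simp

lemma pd3_u2f0 (A B : ℝ) :
    pd3 0 (fun y : Fin 3 → ℝ => A * (1 - B * ((y 0) ^ 2 + (y 1) ^ 2)))
      = fun x : Fin 3 → ℝ => (-(2 * A * B)) * x 0 :=
  funext fun x => by rw [pd3_u2']; simp [Pi.single_apply]

lemma pd3_u2f1 (A B : ℝ) :
    pd3 1 (fun y : Fin 3 → ℝ => A * (1 - B * ((y 0) ^ 2 + (y 1) ^ 2)))
      = fun x : Fin 3 → ℝ => (-(2 * A * B)) * x 1 :=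
  funext fun x => by rw [pd3_u2']; simp [Pi.single_apply]

lemma pd3_u2f2 (A B : ℝ) :
    pd3 2 (fun y : Fin 3 → ℝ => A * (1 - B * ((y 0) ^ 2 + (y 1) ^ 2)))
      = fun _ : Fin 3 → ℝ => (0:ℝ) :=
  funext fun x => by rw [pd3_u2']; simp [Pi.single_apply]

lemma pd3_linear (c : ℝ) (i j : Fin 3) (x : Fin 3 → ℝ) :
    pd3 i (fun y : Fin 3 → ℝ => c * y j) x = c * (Pi.single i 1 : Fin 3 → ℝ) j := by
  rw [pd3_of ((hasFDerivAt_proj j x).const_mul c) i]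
  simp

lemma flux_integral (A B : ℝ) :
    ∫ q in {q : ℝ × ℝ | q.1 ^ 2 + q.2 ^ 2 < 1}, A * (1 - B * (q.1 ^ 2 + q.2 ^ 2))
      = 2 * π * (A / 2 - A * B / 4) := by
  set S : Set (ℝ × ℝ) := {q : ℝ × ℝ | q.1 ^ 2 + q.2 ^ 2 < 1} with hS
  have hmS : MeasurableSet S := by
    apply measurableSet_lt
    · fun_prop
    · fun_prop
  set g : ℝ × ℝ → ℝ := fun q => A * (1 - B * (q.1 ^ 2 + q.2 ^ 2)) with hg
  set F : ℝ × ℝ → ℝ := fun p => p.1 * (A * (1 - B * p.1 ^ 2)) with hF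
  have step1 : ∫ q in S, g q = ∫ q, S.indicator g q := (integral_indicator hmS).symm
  have step2 : ∫ q, S.indicator g q
      = ∫ p in polarCoord.target, p.1 • (S.indicator g (polarCoord.symm p)) :=
    (integral_comp_polarCoord_symm _).symm
  have step3 : ∫ p in polarCoord.target, p.1 • (S.indicator g (polarCoord.symm p))
      = ∫ p in polarCoord.target, ({p : ℝ × ℝ | p.1 < 1}).indicator F p := by
    apply setIntegral_congr_fun (polarCoord.open_target.measurableSet)
    rintro ⟨r, θ⟩ hp
    simp only [polarCoord_target, mem_prod, mem_Ioi, mem_Ioo] at hp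
    have hr : 0 < r := hp.1
    have hsq : ((polarCoord.symm (r, θ)).1) ^ 2 + ((polarCoord.symm (r, θ)).2) ^ 2 = r ^ 2 := by
      simp only [polarCoord_symm_apply]
      have := sin_sq_add_cos_sq θ
      ring_nf
      nlinarith [this]
    have hiff : r ^ 2 < 1 ↔ r < 1 := by
      constructor <;> intro h <;> nlinarith
    simp only [Set.indicator_apply, hS, mem_setOf_eq, hsq, hiff, hg, hF, smul_eq_mul]
    split_ifs with h
    · rfl
    · ring
  have step4 : ∫ p in polarCoord.target, ({p : ℝ × ℝ | p.1 < 1}).indicator F p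
      = ∫ p in (Ioo (0:ℝ) 1) ×ˢ (Ioo (-π) π), F p := by
    have hset : polarCoord.target ∩ {p : ℝ × ℝ | p.1 < 1} = (Ioo (0:ℝ) 1) ×ˢ (Ioo (-π) π) := by
      rw [polarCoord_target]
      ext p
      simp only [mem_inter_iff, mem_prod, mem_Ioi, mem_Ioo, mem_setOf_eq]
      tauto
    rw [setIntegral_indicator (by apply measurableSet_lt <;> fun_prop), hset]
  have hFc : Continuous F := by fun_prop
  have hFint : IntegrableOn F ((Ioo (0:ℝ) 1) ×ˢ (Ioo (-π) π)) := by
    apply (hFc.continuousOn.integrableOn_compact (isCompact_Icc.prod isCompact_Icc)).mono_set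
    exact Set.prod_mono Ioo_subset_Icc_self Ioo_subset_Icc_self
  have step5 : ∫ p in (Ioo (0:ℝ) 1) ×ˢ (Ioo (-π) π), F p
      = ∫ x in Ioo (0:ℝ) 1, ∫ _y in Ioo (-π) π, F (x, _y) := by
    rw [Measure.volume_eq_prod] at hFint ⊢
    exact setIntegral_prod F hFint
  have step6 : ∀ x : ℝ, (∫ _y in Ioo (-π) π, F (x, _y)) = (2 * π) * (x * (A * (1 - B * x ^ 2))) := by
    intro x
    simp only [hF]
    rw [setIntegral_const]
    simp only [smul_eq_mul]
    rw [Real.volume_real_Ioo_of_le (by linarith [pi_pos])]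
    ring
  have step6' : (∫ x in Ioo (0:ℝ) 1, ∫ _y in Ioo (-π) π, F (x, _y))
      = ∫ x in Ioo (0:ℝ) 1, (2 * π) * (x * (A * (1 - B * x ^ 2))) :=
    setIntegral_congr_fun measurableSet_Ioo (fun x _ => step6 x)
  have step7 : ∫ x in Ioo (0:ℝ) 1, (2 * π) * (x * (A * (1 - B * x ^ 2)))
      = 2 * π * (A / 2 - A * B / 4) := by
    rw [← integral_Ioc_eq_integral_Ioo, ← intervalIntegral.integral_of_le (by norm_num : (0:ℝ) ≤ 1)]
    have : (fun x : ℝ => 2 * π * (x * (A * (1 - B * x ^ 2))))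
        = fun x : ℝ => (2 * π * A) * x ^ 1 - (2 * π * A * B) * x ^ 3 := by
      funext x; ring
    rw [this]
    rw [intervalIntegral.integral_sub (((intervalIntegral.intervalIntegrable_pow 1).const_mul _))
      (((intervalIntegral.intervalIntegrable_pow 3).const_mul _))]
    rw [intervalIntegral.integral_const_mul, intervalIntegral.integral_const_mul,
      integral_pow, integral_pow]
    norm_num
    ring
  rw [step1, step2, step3, step4, step5, step6', step7]

end Aux

/-- The Hagen–Poiseuille-type flow with the Navier-slip boundary condition in the
infinite pipe with unit-disk cross section: with `A = 2(α+2)Φ/((α+4)π)`,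
`B = α/(α+2)`, `u = (0,0,A(1 - B(x₁²+x₂²)))` and `p = -(8αΦ/((α+4)π)) x₃`, one has
(i) `div u = 0`; (ii) `(u·∇)u + ∇p - Δu = 0`; (iii) the Navier-slip boundary
conditions on the boundary `x₁²+x₂² = 1` with outer normal `n = (x₁,x₂,0)`;
(iv) the flux through the unit-disk cross section equals `Φ`. -/
theorem hagen_poiseuille_navier_slip
    (α Φ A B : ℝ) (hα : 0 < α)
    (hA : A = 2 * (α + 2) * Φ / ((α + 4) * Real.pi))
    (hB : B = α / (α + 2))
    (u : (Fin 3 → ℝ) → Fin 3 → ℝ) (p : (Fin 3 → ℝ) → ℝ)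
    (hu : ∀ x, u x = ![0, 0, A * (1 - B * ((x 0) ^ 2 + (x 1) ^ 2))])
    (hp : ∀ x, p x = -(8 * α * Φ / ((α + 4) * Real.pi)) * x 2) :
    -- (i) div u = 0
    (∀ x, ∑ i, pd3 i (fun y => u y i) x = 0) ∧
    -- (ii) (u·∇)u + ∇p - Δu = 0
    (∀ x, ∀ j : Fin 3,
      (∑ i, u x i * pd3 i (fun y => u y j) x) + pd3 j p x
        - (∑ i, pd3 i (pd3 i (fun y => u y j)) x) = 0) ∧
    -- (iii) Navier-slip boundary condition on {x₁² + x₂² = 1} with n = (x₁,x₂,0)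
    (∀ x : Fin 3 → ℝ, (x 0) ^ 2 + (x 1) ^ 2 = 1 →
      (∑ i, u x i * (![x 0, x 1, 0] : Fin 3 → ℝ) i) = 0 ∧
      ∀ k : Fin 3,
        2 * (strainDotN3 u x ![x 0, x 1, 0] k
              - (∑ i, strainDotN3 u x ![x 0, x 1, 0] i
                  * (![x 0, x 1, 0] : Fin 3 → ℝ) i)
                * (![x 0, x 1, 0] : Fin 3 → ℝ) k)
          + α * (u x k
              - (∑ i, u x i * (![x 0, x 1, 0] : Fin 3 → ℝ) i)
                * (![x 0, x 1, 0] : Fin 3 → ℝ) k) = 0) ∧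
    -- (iv) flux through the unit-disk cross section is Φ
    (∫ xh in {q : ℝ × ℝ | q.1 ^ 2 + q.2 ^ 2 < 1}, u ![xh.1, xh.2, 0] 2 = Φ) := by
  have hπ : Real.pi ≠ 0 := Real.pi_ne_zero
  have h2 : α + 2 ≠ 0 := by linarith
  have h4 : α + 4 ≠ 0 := by linarith
  have hu0 : (fun y => u y 0) = fun _ : Fin 3 → ℝ => (0:ℝ) := funext fun y => by rw [hu]; rfl
  have hu1 : (fun y => u y 1) = fun _ : Fin 3 → ℝ => (0:ℝ) := funext fun y => by rw [hu]; rfl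
  have hu2 : (fun y => u y 2) = fun y : Fin 3 → ℝ => A * (1 - B * ((y 0) ^ 2 + (y 1) ^ 2)) :=
    funext fun y => by rw [hu]; rfl
  have hp' : p = fun x : Fin 3 → ℝ => (-(8 * α * Φ / ((α + 4) * Real.pi))) * x 2 := funext hp
  refine ⟨?_, ?_, ?_, ?_⟩
  · -- (i)
    intro x
    rw [Fin.sum_univ_three, hu0, hu1, hu2, pd3_constf, pd3_constf, pd3_u2f2]
    norm_num
  · -- (ii)
    intro x j
    fin_cases j
    · rw [show (Fin.mk 0 (by norm_num) : Fin 3) = 0 from rfl]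
      rw [hu0, hp']
      simp only [Fin.sum_univ_three, pd3_constf, pd3_linear]
      simp [Pi.single_apply]
    · rw [show (Fin.mk 1 (by norm_num) : Fin 3) = 1 from rfl]
      rw [hu1, hp']
      simp only [Fin.sum_univ_three, pd3_constf, pd3_linear]
      simp [Pi.single_apply]
    · rw [show (Fin.mk 2 (by norm_num) : Fin 3) = 2 from rfl]
      simp only [Fin.sum_univ_three]
      rw [hu2, hp', pd3_u2f0, pd3_u2f1, pd3_u2f2]
      simp only [pd3_constf, pd3_linear]
      simp only [hu, Pi.single_apply]
      norm_num [Matrix.cons_val_zero, Matrix.cons_val_one]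
      rw [hA, hB]
      field_simp
      ring
  · -- (iii)
    intro x hx
    constructor
    · simp only [Fin.sum_univ_three]
      simp [hu]
    · intro k
      have hB' : B * (α + 2) = α := by rw [hB]; field_simp
      fin_cases k
      · rw [show (Fin.mk 0 (by norm_num) : Fin 3) = 0 from rfl]
        simp only [strainDotN3, Fin.sum_univ_three]
        rw [hu0, hu1, hu2, pd3_u2f0, pd3_u2f1, pd3_u2f2]
        simp only [pd3_constf]
        simp [hu]
      · rw [show (Fin.mk 1 (by norm_num) : Fin 3) = 1 from rfl]
        simp only [strainDotN3, Fin.sum_univ_three]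
        rw [hu0, hu1, hu2, pd3_u2f0, pd3_u2f1, pd3_u2f2]
        simp only [pd3_constf]
        simp [hu]
      · rw [show (Fin.mk 2 (by norm_num) : Fin 3) = 2 from rfl]
        simp only [strainDotN3, Fin.sum_univ_three]
        rw [hu0, hu1, hu2, pd3_u2f0, pd3_u2f1, pd3_u2f2]
        simp only [pd3_constf]
        simp [hu]
        linear_combination (-(2 * A * B) - α * A * B) * hx - A * hB'
  · -- (iv)
    have : ∀ xh : ℝ × ℝ, u ![xh.1, xh.2, 0] 2 = A * (1 - B * (xh.1 ^ 2 + xh.2 ^ 2)) := by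
      intro xh; rw [hu]; norm_num; rfl
    rw [setIntegral_congr_fun (by apply measurableSet_lt <;> fun_prop) (fun q _ => this q),
      flux_integral]
    rw [hA, hB]
    field_simp
    ring
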